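/- Let G, Ḡ : ℝ^d → ℝ be convex and differentiable, λ > 0, x̂ ∈ argmin_{x ∈ ℝ^d} { Ḡ(x) + λ‖x‖ }, and x* ∈ argmin_{x ∈ ℝ^d} { G(x) + 3λ‖x‖ }, both assumed to exist. If ‖∇Ḡ(x*) − ∇G(x*)‖_* ≤ λ/2, then ‖x*‖ ≤ 3‖x̂‖. -/
import Mathlib

open Set Filter

/-- Gradient inequality for convex differentiable functions. -/
lemma grad_ineq {E : Type*} [NormedAddCommGroup E] [NormedSpace ℝ E]
    {F : E → ℝ} (hconv : ConvexOn ℝ Set.univ F) (hd : Differentiable ℝ F) (x y : E) :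
    fderiv ℝ F x (y - x) ≤ F y - F x := by
  set φ : ℝ → ℝ := F ∘ (AffineMap.lineMap x y) with hφ
  have hφconv : ConvexOn ℝ Set.univ φ := by
    have := hconv.comp_affineMap (AffineMap.lineMap x y)
    simpa using this
  have hder : HasDerivAt φ (fderiv ℝ F x (y - x)) 0 := by
    have hc : HasDerivAt (fun t : ℝ => AffineMap.lineMap x y t) (y - x) 0 := by
      simp only [AffineMap.lineMap_apply]
      have : HasDerivAt (fun t : ℝ => t • (y - x)) (y - x) 0 := by
        simpa using (hasDerivAt_id (0:ℝ)).smul_const (y - x)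
      simpa using this.add_const x
    have h0 : HasFDerivAt F (fderiv ℝ F x) ((AffineMap.lineMap x y) (0:ℝ)) := by
      rw [AffineMap.lineMap_apply_zero]; exact (hd x).hasFDerivAt
    exact h0.comp_hasDerivAt 0 hc
  have := hφconv.le_slope_of_hasDerivAt (mem_univ (0:ℝ)) (mem_univ (1:ℝ)) one_pos hder
  simpa [slope_def_field, hφ] using this

/-- Directional derivative lower bound at a minimizer of `F + c‖·‖`. -/
lemma min_dir_bound {E : Type*} [NormedAddCommGroup E] [NormedSpace ℝ E]
    {F : E → ℝ} {x : E} {c : ℝ} (hc : 0 ≤ c) (hd : DifferentiableAt ℝ F x)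
    (hmin : ∀ y, F x + c * ‖x‖ ≤ F y + c * ‖y‖) (h : E) :
    c * (‖x‖ - ‖x + h‖) ≤ fderiv ℝ F x h := by
  set φ : ℝ → ℝ := fun t => F (x + t • h) with hφ
  have hder : HasDerivAt φ (fderiv ℝ F x h) 0 := by
    have hc' : HasDerivAt (fun t : ℝ => x + t • h) h 0 := by
      have : HasDerivAt (fun t : ℝ => t • h) h 0 := by
        simpa using (hasDerivAt_id (0:ℝ)).smul_const h
      simpa using this.const_add x
    have h0 : HasFDerivAt F (fderiv ℝ F x) (x + (0:ℝ) • h) := by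
      simpa using hd.hasFDerivAt
    exact h0.comp_hasDerivAt 0 hc'
  have htend : Tendsto (slope φ 0) (nhdsWithin 0 (Ioi 0)) (nhds (fderiv ℝ F x h)) :=
    (hasDerivAt_iff_tendsto_slope.mp hder).mono_left
      (nhdsWithin_mono _ (fun t ht => ne_of_gt ht))
  refine ge_of_tendsto htend ?_
  filter_upwards [Ioo_mem_nhdsGT_of_mem (by norm_num : (0:ℝ) ∈ Ico 0 1)] with t ht
  obtain ⟨ht0, ht1⟩ := ht
  have hnorm : ‖x + t • h‖ ≤ (1 - t) * ‖x‖ + t * ‖x + h‖ := by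
    have : x + t • h = (1 - t) • x + t • (x + h) := by module
    rw [this]
    calc ‖(1 - t) • x + t • (x + h)‖ ≤ ‖(1-t) • x‖ + ‖t • (x+h)‖ := norm_add_le _ _
      _ = (1 - t) * ‖x‖ + t * ‖x + h‖ := by
          rw [norm_smul, norm_smul, Real.norm_eq_abs, Real.norm_eq_abs,
            abs_of_nonneg (by linarith), abs_of_nonneg ht0.le]
  have hm := hmin (x + t • h)
  have key : t * (c * (‖x‖ - ‖x + h‖)) ≤ φ t - φ 0 := by
    have : c * ‖x + t • h‖ ≤ c * ((1 - t) * ‖x‖ + t * ‖x + h‖) :=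
      mul_le_mul_of_nonneg_left hnorm hc
    simp only [hφ, zero_smul, add_zero]
    nlinarith
  rw [slope_def_field, sub_zero, le_div_iff₀ ht0]
  linarith [key]

/-- Deterministic localization lower bound (part of the proof of
Lemma 3.2).  `G, Ḡ : E → ℝ` convex and differentiable, `λ > 0`,
`x̂ ∈ argmin (Ḡ + λ‖·‖)`, `x* ∈ argmin (G + 3λ‖·‖)`.  If
`‖∇Ḡ(x*) - ∇G(x*)‖_* ≤ λ/2` then `‖x*‖ ≤ 3‖x̂‖`.  (The dual norm of the
gradient is the operator norm of the Fréchet derivative.) -/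
theorem stmt6
    {E : Type*} [NormedAddCommGroup E] [NormedSpace ℝ E] [FiniteDimensional ℝ E]
    (G Gbar : E → ℝ)
    (hGconv : ConvexOn ℝ Set.univ G) (hGbarconv : ConvexOn ℝ Set.univ Gbar)
    (hGdiff : Differentiable ℝ G) (hGbardiff : Differentiable ℝ Gbar)
    (lam : ℝ) (hlam : 0 < lam)
    (xhat : E) (hxhat : ∀ y, Gbar xhat + lam * ‖xhat‖ ≤ Gbar y + lam * ‖y‖)
    (xstar : E) (hxstar : ∀ y, G xstar + 3 * lam * ‖xstar‖ ≤ G y + 3 * lam * ‖y‖)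
    (hgrad : ‖fderiv ℝ Gbar xstar - fderiv ℝ G xstar‖ ≤ lam / 2) :
    ‖xstar‖ ≤ 3 * ‖xhat‖ := by
  set v : E := xhat - xstar with hv
  have h1 : fderiv ℝ Gbar xstar v ≤ Gbar xhat - Gbar xstar :=
    grad_ineq hGbarconv hGbardiff xstar xhat
  have h2 : Gbar xhat - Gbar xstar ≤ lam * ‖xstar‖ - lam * ‖xhat‖ := by
    have := hxhat xstar; linarith
  have h3 : 3 * lam * (‖xstar‖ - ‖xhat‖) ≤ fderiv ℝ G xstar v := by
    have := min_dir_bound (F := G) (x := xstar) (c := 3 * lam)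
      (by positivity) (hGdiff xstar) hxstar v
    rwa [hv, add_sub_cancel] at this
  have h4 : |fderiv ℝ Gbar xstar v - fderiv ℝ G xstar v| ≤ lam / 2 * ‖v‖ := by
    have := (fderiv ℝ Gbar xstar - fderiv ℝ G xstar).le_opNorm v
    simp only [ContinuousLinearMap.sub_apply] at this
    calc |fderiv ℝ Gbar xstar v - fderiv ℝ G xstar v|
        = ‖(fderiv ℝ Gbar xstar) v - (fderiv ℝ G xstar) v‖ := (Real.norm_eq_abs _).symm
      _ ≤ ‖fderiv ℝ Gbar xstar - fderiv ℝ G xstar‖ * ‖v‖ := this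
      _ ≤ lam / 2 * ‖v‖ := by gcongr
  have h5 : ‖v‖ ≤ ‖xhat‖ + ‖xstar‖ := norm_sub_le _ _
  have h6 : -(lam / 2 * (‖xhat‖ + ‖xstar‖)) ≤
      fderiv ℝ Gbar xstar v - fderiv ℝ G xstar v := by
    have := abs_le.mp h4
    nlinarith
  nlinarith [norm_nonneg xhat, norm_nonneg xstar]
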